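/- arXiv:1906.06899 — 2 statements merged into one kernel-verified Lean document; each statement's English description precedes it below -/
import Mathlib

section
/- Let X, X̃ ∈ ℝ^{N×T} with E = X − X̃ satisfying ‖E[:,j]‖₂ ≤ ε for all j. Let V, Ṽ ∈ ℝ^{N×R} with F = V − Ṽ satisfying σ_min(V) > σ_max(F). Suppose there exists G ∈ ℝ_+^{R×T} with V G = X, and let G̃ ∈ ℝ_+^{R×T} be any minimizer of ‖Ṽ G' − X̃‖_F over entrywise nonnegative G' ∈ ℝ_+^{R×T}. Let γ = max_{1 ≤ j ≤ T} ‖G[:,j]‖₂. Then the rows of G and G̃ satisfy max_{1 ≤ i ≤ R} ‖G[i,:] − G̃[i,:]‖₂ ≤ √T · (σ_max(F) γ + ε) / (σ_min(V) − σ_max(F)). -/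
open Matrix BigOperators

noncomputable section

/-- The `T × T` shift matrix `S_τ` with ones on the `τ`-th upper diagonal. -/
def shiftMat (T τ : ℕ) : Matrix (Fin T) (Fin T) ℝ :=
  Matrix.of fun i j => if (j : ℕ) = (i : ℕ) + τ then 1 else 0

/-- Right shift with zero padding: `(S_τᵀ x)_j = x_{j-τ}`. -/
def shift {T : ℕ} (τ : ℕ) (x : Fin T → ℝ) : Fin T → ℝ :=
  (shiftMat T τ)ᵀ.mulVec x

/-- Euclidean dot product. -/
def dot {T : ℕ} (u v : Fin T → ℝ) : ℝ := ∑ i, u i * v i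

/-- Euclidean norm. -/
def enorm' {T : ℕ} (u : Fin T → ℝ) : ℝ := Real.sqrt (∑ i, u i ^ 2)

open Classical in
/-- Cosine of the angle between two vectors, with the convention that it is `0`
if either vector is zero. -/
def vcos {T : ℕ} (u v : Fin T → ℝ) : ℝ :=
  if u = 0 ∨ v = 0 then 0 else dot u v / (enorm' u * enorm' v)

/-- The `L`-shift cosine similarity `cos_L`. -/
def cosL {T : ℕ} (L : ℕ) (u v : Fin T → ℝ) : ℝ :=
  ⨆ ℓ : Fin L, max (vcos (shift (ℓ : ℕ) u) v) (vcos u (shift (ℓ : ℕ) v))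


/-- The largest singular value of a rectangular matrix, characterized as the supremum of
`‖B v‖₂` over unit vectors `v`. -/
def smax {T R : ℕ} (B : Matrix (Fin T) (Fin R) ℝ) : ℝ :=
  sSup {c : ℝ | ∃ v : Fin R → ℝ, enorm' v = 1 ∧ c = enorm' (B.mulVec v)}

/-- The smallest (`R`-th) singular value of a `T × R` matrix, characterized as the infimum
of `‖B v‖₂` over unit vectors `v`. -/
def smin {T R : ℕ} (B : Matrix (Fin T) (Fin R) ℝ) : ℝ :=
  sInf {c : ℝ | ∃ v : Fin R → ℝ, enorm' v = 1 ∧ c = enorm' (B.mulVec v)}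

/-- The Frobenius norm of a matrix. -/
def frob {m n : ℕ} (A : Matrix (Fin m) (Fin n) ℝ) : ℝ :=
  Real.sqrt (∑ i, ∑ j, A i j ^ 2)

def eu {n : ℕ} (u : Fin n → ℝ) : EuclideanSpace ℝ (Fin n) := WithLp.toLp 2 u

lemma enorm'_eq {n : ℕ} (u : Fin n → ℝ) : enorm' u = ‖eu u‖ := by
  rw [EuclideanSpace.norm_eq]
  exact congrArg Real.sqrt (Finset.sum_congr rfl fun i _ => by
    rw [Real.norm_eq_abs, sq_abs]; rfl)

lemma dot_eq {n : ℕ} (u v : Fin n → ℝ) : dot u v = inner ℝ (eu u) (eu v) := by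
  rw [PiLp.inner_apply]; simp [dot, eu, mul_comm]

lemma enorm'_nonneg {n : ℕ} (u : Fin n → ℝ) : 0 ≤ enorm' u := Real.sqrt_nonneg _

lemma enorm'_sub_comm {n : ℕ} (u v : Fin n → ℝ) : enorm' (u - v) = enorm' (v - u) := by
  rw [enorm'_eq, enorm'_eq]; show ‖eu u - eu v‖ = ‖eu v - eu u‖; exact norm_sub_rev _ _

lemma enorm'_smul {n : ℕ} (c : ℝ) (u : Fin n → ℝ) : enorm' (c • u) = |c| * enorm' u := by
  rw [enorm'_eq, enorm'_eq]; show ‖c • eu u‖ = _; rw [norm_smul, Real.norm_eq_abs]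

lemma enorm'_eq_zero {n : ℕ} {u : Fin n → ℝ} : enorm' u = 0 ↔ u = 0 := by
  rw [enorm'_eq, norm_eq_zero]; simp [eu]

/-- Frobenius bound -/
lemma norm_eu_sq {n : ℕ} (w : Fin n → ℝ) : ‖eu w‖ ^ 2 = ∑ j, w j ^ 2 := by
  rw [← enorm'_eq]
  unfold enorm'
  rw [Real.sq_sqrt (by positivity)]

lemma enorm'_triangle_sub {n : ℕ} (u v : Fin n → ℝ) : enorm' (u - v) ≤ enorm' u + enorm' v := by
  rw [enorm'_eq, enorm'_eq, enorm'_eq]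
  exact norm_sub_le (eu u) (eu v)

lemma enorm'_sub_ge {n : ℕ} (u v : Fin n → ℝ) : enorm' u - enorm' v ≤ enorm' (u - v) := by
  rw [enorm'_eq, enorm'_eq, enorm'_eq]
  exact norm_sub_norm_le (eu u) (eu v)

lemma mulVec_enorm_le_frob {m n : ℕ} (B : Matrix (Fin m) (Fin n) ℝ) (v : Fin n → ℝ) :
    enorm' (B.mulVec v) ≤ frob B * enorm' v := by
  have hsq : ∀ k (w : Fin k → ℝ), ‖eu w‖ ^ 2 = ∑ j, w j ^ 2 := fun k w => norm_eu_sq w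
  have h1 : ∀ i, (B.mulVec v i) ^ 2 ≤ (∑ j, B i j ^ 2) * (∑ j, v j ^ 2) := by
    intro i
    have hcs := real_inner_mul_inner_self_le (eu (B i)) (eu v)
    rw [real_inner_self_eq_norm_sq, real_inner_self_eq_norm_sq, hsq, hsq] at hcs
    have h2 : B.mulVec v i = dot (B i) v := rfl
    rw [h2, dot_eq, sq]
    exact hcs
  have h2 : (∑ i, B.mulVec v i ^ 2) ≤ (∑ i, ∑ j, B i j ^ 2) * (∑ j, v j ^ 2) := by
    rw [Finset.sum_mul]
    exact Finset.sum_le_sum fun i _ => h1 i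
  unfold enorm' frob
  calc Real.sqrt (∑ i, B.mulVec v i ^ 2) ≤ Real.sqrt ((∑ i, ∑ j, B i j ^ 2) * (∑ j, v j ^ 2)) :=
        Real.sqrt_le_sqrt h2
    _ = _ := by rw [Real.sqrt_mul (by positivity)]

lemma smax_bddAbove {m n : ℕ} (B : Matrix (Fin m) (Fin n) ℝ) :
    BddAbove {c : ℝ | ∃ v : Fin n → ℝ, enorm' v = 1 ∧ c = enorm' (B.mulVec v)} := by
  refine ⟨frob B, ?_⟩
  rintro c ⟨v, hv, rfl⟩
  calc enorm' (B.mulVec v) ≤ frob B * enorm' v := mulVec_enorm_le_frob B v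
    _ = frob B := by rw [hv, mul_one]

lemma smax_mulVec_le {m n : ℕ} (B : Matrix (Fin m) (Fin n) ℝ) (v : Fin n → ℝ) :
    enorm' (B.mulVec v) ≤ smax B * enorm' v := by
  by_cases hv : v = 0
  · subst hv; rw [Matrix.mulVec_zero]
    simp [enorm'_eq_zero.mpr rfl]
  · have hnv : enorm' v ≠ 0 := fun h => hv (enorm'_eq_zero.mp h)
    have hpos : 0 < enorm' v := lt_of_le_of_ne (enorm'_nonneg v) (Ne.symm hnv)
    set u := (enorm' v)⁻¹ • v with hu
    have hun : enorm' u = 1 := by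
      rw [enorm'_smul, abs_of_pos (by positivity), inv_mul_cancel₀ hnv]
    have hmem : enorm' (B.mulVec u) ∈ {c : ℝ | ∃ v : Fin n → ℝ, enorm' v = 1 ∧ c = enorm' (B.mulVec v)} :=
      ⟨u, hun, rfl⟩
    have hle : enorm' (B.mulVec u) ≤ smax B := le_csSup (smax_bddAbove B) hmem
    have : enorm' (B.mulVec u) = (enorm' v)⁻¹ * enorm' (B.mulVec v) := by
      rw [hu, Matrix.mulVec_smul, enorm'_smul, abs_of_pos (by positivity)]
    rw [this] at hle
    calc enorm' (B.mulVec v) = (enorm' v)⁻¹ * enorm' (B.mulVec v) * enorm' v := by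
          field_simp
      _ ≤ smax B * enorm' v := by exact mul_le_mul_of_nonneg_right hle (le_of_lt hpos)

lemma smin_mulVec_ge {m n : ℕ} (B : Matrix (Fin m) (Fin n) ℝ) (v : Fin n → ℝ) :
    smin B * enorm' v ≤ enorm' (B.mulVec v) := by
  by_cases hv : v = 0
  · subst hv; rw [Matrix.mulVec_zero]
    simp [enorm'_eq_zero.mpr rfl]
  · have hnv : enorm' v ≠ 0 := fun h => hv (enorm'_eq_zero.mp h)
    have hpos : 0 < enorm' v := lt_of_le_of_ne (enorm'_nonneg v) (Ne.symm hnv)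
    set u := (enorm' v)⁻¹ • v with hu
    have hun : enorm' u = 1 := by
      rw [enorm'_smul, abs_of_pos (by positivity), inv_mul_cancel₀ hnv]
    have hmem : enorm' (B.mulVec u) ∈ {c : ℝ | ∃ v : Fin n → ℝ, enorm' v = 1 ∧ c = enorm' (B.mulVec v)} :=
      ⟨u, hun, rfl⟩
    have hbdd : BddBelow {c : ℝ | ∃ v : Fin n → ℝ, enorm' v = 1 ∧ c = enorm' (B.mulVec v)} :=
      ⟨0, by rintro c ⟨w, _, rfl⟩; exact enorm'_nonneg _⟩
    have hle : smin B ≤ enorm' (B.mulVec u) := csInf_le hbdd hmem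
    have : enorm' (B.mulVec u) = (enorm' v)⁻¹ * enorm' (B.mulVec v) := by
      rw [hu, Matrix.mulVec_smul, enorm'_smul, abs_of_pos (by positivity)]
    rw [this] at hle
    calc smin B * enorm' v ≤ (enorm' v)⁻¹ * enorm' (B.mulVec v) * enorm' v :=
          mul_le_mul_of_nonneg_right hle (le_of_lt hpos)
      _ = enorm' (B.mulVec v) := by field_simp

lemma smax_nonneg {m n : ℕ} (hn : 0 < n) (B : Matrix (Fin m) (Fin n) ℝ) : 0 ≤ smax B := by
  set v : Fin n → ℝ := fun j => if j = ⟨0, hn⟩ then 1 else 0 with hv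
  have hun : enorm' v = 1 := by
    unfold enorm'
    rw [show (∑ i, v i ^ 2) = 1 by
      rw [hv]; simp [Finset.sum_ite_eq']]
    exact Real.sqrt_one
  have : enorm' (B.mulVec v) ∈ {c : ℝ | ∃ v : Fin n → ℝ, enorm' v = 1 ∧ c = enorm' (B.mulVec v)} :=
    ⟨v, hun, rfl⟩
  exact le_trans (enorm'_nonneg _) (le_csSup (smax_bddAbove B) this)

lemma colwise_min {N T R : ℕ}
    (Vt : Matrix (Fin N) (Fin R) ℝ) (Xt : Matrix (Fin N) (Fin T) ℝ)
    (Gt : Matrix (Fin R) (Fin T) ℝ) (hGtpos : ∀ i j, 0 ≤ Gt i j)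
    (hGt : ∀ G' : Matrix (Fin R) (Fin T) ℝ, (∀ i j, 0 ≤ G' i j) →
      frob (Vt * Gt - Xt) ≤ frob (Vt * G' - Xt))
    (j : Fin T) (w : Fin R → ℝ) (hw : ∀ k, 0 ≤ w k) :
    ∑ i, (Vt.mulVec (fun k => Gt k j) i - Xt i j) ^ 2 ≤
    ∑ i, (Vt.mulVec w i - Xt i j) ^ 2 := by
  classical
  set G' : Matrix (Fin R) (Fin T) ℝ := Matrix.of (fun k l => if l = j then w k else Gt k l) with hG'
  have hG'pos : ∀ i l, 0 ≤ G' i l := by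
    intro i l
    simp only [hG', Matrix.of_apply]
    split
    · exact hw i
    · exact hGtpos i l
  have h := hGt G' hG'pos
  unfold frob at h
  have h2 : (∑ i, ∑ l, ((Vt * Gt - Xt) i l) ^ 2) ≤ ∑ i, ∑ l, ((Vt * G' - Xt) i l) ^ 2 := by
    have hnn1 : (0:ℝ) ≤ ∑ i, ∑ l, ((Vt * Gt - Xt) i l) ^ 2 := by positivity
    have hnn2 : (0:ℝ) ≤ ∑ i, ∑ l, ((Vt * G' - Xt) i l) ^ 2 := by positivity
    calc (∑ i, ∑ l, ((Vt * Gt - Xt) i l) ^ 2)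
        = Real.sqrt (∑ i, ∑ l, ((Vt * Gt - Xt) i l) ^ 2) ^ 2 := (Real.sq_sqrt hnn1).symm
      _ ≤ Real.sqrt (∑ i, ∑ l, ((Vt * G' - Xt) i l) ^ 2) ^ 2 :=
          pow_le_pow_left₀ (Real.sqrt_nonneg _) h 2
      _ = _ := Real.sq_sqrt hnn2
  have hc1 : (∑ l, ∑ i, ((Vt * Gt - Xt) i l) ^ 2) = ∑ i, ∑ l, ((Vt * Gt - Xt) i l) ^ 2 :=
    Finset.sum_comm
  have hc2 : (∑ l, ∑ i, ((Vt * G' - Xt) i l) ^ 2) = ∑ i, ∑ l, ((Vt * G' - Xt) i l) ^ 2 :=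
    Finset.sum_comm
  have h2' : (∑ l, ∑ i, ((Vt * Gt - Xt) i l) ^ 2) ≤ ∑ l, ∑ i, ((Vt * G' - Xt) i l) ^ 2 := by
    rw [hc1, hc2]; exact h2
  set a : Fin T → ℝ := fun l => ∑ i, ((Vt * Gt - Xt) i l) ^ 2 with ha
  set b : Fin T → ℝ := fun l => ∑ i, ((Vt * G' - Xt) i l) ^ 2 with hb
  have hcol : ∀ M : Matrix (Fin R) (Fin T) ℝ, ∀ i l, (Vt * M) i l = Vt.mulVec (fun k => M k l) i := by
    intro M i l
    rw [Matrix.mul_apply]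
    rfl
  have heq : ∀ l, l ≠ j → a l = b l := by
    intro l hl
    apply Finset.sum_congr rfl
    intro i _
    have : (fun k => G' k l) = (fun k => Gt k l) := by
      funext k
      simp [hG', hl]
    simp only [Matrix.sub_apply, hcol, this]
  have hsum_a : ∑ l, a l = a j + ∑ l ∈ Finset.univ.erase j, a l :=
    (Finset.add_sum_erase _ a (Finset.mem_univ j)).symm
  have hsum_b : ∑ l, b l = b j + ∑ l ∈ Finset.univ.erase j, b l :=
    (Finset.add_sum_erase _ b (Finset.mem_univ j)).symm
  have hrest : ∑ l ∈ Finset.univ.erase j, a l = ∑ l ∈ Finset.univ.erase j, b l :=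
    Finset.sum_congr rfl fun l hl => heq l (Finset.ne_of_mem_erase hl)
  have hj : a j ≤ b j := by
    have h3 : ∑ l, a l ≤ ∑ l, b l := h2'
    rw [hsum_a, hsum_b, hrest] at h3
    linarith
  have hbj : b j = ∑ i, (Vt.mulVec w i - Xt i j) ^ 2 := by
    apply Finset.sum_congr rfl
    intro i _
    have : (fun k => G' k j) = w := by funext k; simp [hG']
    simp only [hb, Matrix.sub_apply, hcol, this]
  have haj : a j = ∑ i, (Vt.mulVec (fun k => Gt k j) i - Xt i j) ^ 2 := by
    apply Finset.sum_congr rfl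
    intro i _
    simp only [ha, Matrix.sub_apply, hcol]
  rw [haj, hbj] at hj
  exact hj

lemma key_col {N T R : ℕ}
    (Vt : Matrix (Fin N) (Fin R) ℝ) (Xt : Matrix (Fin N) (Fin T) ℝ)
    (Gt : Matrix (Fin R) (Fin T) ℝ) (hGtpos : ∀ i j, 0 ≤ Gt i j)
    (hGt : ∀ G' : Matrix (Fin R) (Fin T) ℝ, (∀ i j, 0 ≤ G' i j) →
      frob (Vt * Gt - Xt) ≤ frob (Vt * G' - Xt))
    (j : Fin T) (g : Fin R → ℝ) (hg : ∀ k, 0 ≤ g k) :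
    enorm' (Vt.mulVec (fun k => g k - Gt k j)) ≤ enorm' (fun i => Vt.mulVec g i - Xt i j) := by
  set gt : Fin R → ℝ := fun k => Gt k j with hgt
  set d : Fin R → ℝ := fun k => g k - Gt k j with hd
  set w : EuclideanSpace ℝ (Fin N) := eu (Vt.mulVec d) with hw
  set r : EuclideanSpace ℝ (Fin N) := eu (fun i => Vt.mulVec gt i - Xt i j) with hr
  have hds : d = g - gt := rfl
  have hmv : Vt.mulVec d = Vt.mulVec g - Vt.mulVec gt := by
    rw [hds, Matrix.mulVec_sub]
  have hmin : ∀ t : ℝ, 0 ≤ t → t ≤ 1 → ‖r‖ ^ 2 ≤ ‖r + t • w‖ ^ 2 := by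
    intro t ht0 ht1
    have hwt : ∀ k, 0 ≤ gt k + t * d k := by
      intro k
      have h1 := hGtpos k j
      have h2 := hg k
      simp only [hgt, hd]
      nlinarith
    have h := colwise_min Vt Xt Gt hGtpos hGt j (fun k => gt k + t * d k) hwt
    have hlhs : (∑ i, (Vt.mulVec gt i - Xt i j) ^ 2) = ‖r‖ ^ 2 := by
      rw [hr, norm_eu_sq]
    have hmv2 : Vt.mulVec (fun k => gt k + t * d k) = Vt.mulVec gt + t • Vt.mulVec d := by
      have : (fun k => gt k + t * d k) = gt + t • d := rfl
      rw [this, Matrix.mulVec_add, Matrix.mulVec_smul]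
    have hrw : r + t • w = eu (fun i => (Vt.mulVec gt i - Xt i j) + t * Vt.mulVec d i) := rfl
    have hrhs : (∑ i, (Vt.mulVec (fun k => gt k + t * d k) i - Xt i j) ^ 2) = ‖r + t • w‖ ^ 2 := by
      rw [hrw, norm_eu_sq]
      apply Finset.sum_congr rfl
      intro i _
      rw [hmv2]
      show ((Vt.mulVec gt i + t * Vt.mulVec d i) - Xt i j) ^ 2 = _
      ring
    rw [hlhs, hrhs] at h
    exact h
  have hvar : 0 ≤ (inner ℝ w r : ℝ) := by
    by_contra hneg
    push_neg at hneg
    set p : ℝ := inner ℝ w r with hp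
    set c : ℝ := ‖w‖ ^ 2 with hc
    have hkey : ∀ t : ℝ, 0 ≤ t → t ≤ 1 → 0 ≤ 2 * t * p + t ^ 2 * c := by
      intro t ht0 ht1
      have h := hmin t ht0 ht1
      rw [norm_add_sq_real] at h
      have h1 : (inner ℝ r (t • w) : ℝ) = t * p := by
        rw [real_inner_smul_right, real_inner_comm]
      rw [h1, norm_smul] at h
      have : (‖t‖ * ‖w‖) ^ 2 = t ^ 2 * c := by
        rw [mul_pow, hc, Real.norm_eq_abs, sq_abs]
      rw [this] at h
      linarith
    have hc0 : 0 ≤ c := sq_nonneg _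
    rcases eq_or_lt_of_le hc0 with hceq | hcpos
    · have := hkey 1 zero_le_one le_rfl
      rw [← hceq] at this
      linarith
    · set t : ℝ := min 1 (-p / c) with htdef
      have htpos : 0 < t := lt_min one_pos (div_pos (by linarith) hcpos)
      have ht1 : t ≤ 1 := min_le_left _ _
      have htc : t * c ≤ -p := by
        have h2 : t ≤ -p / c := min_le_right _ _
        calc t * c ≤ (-p / c) * c := mul_le_mul_of_nonneg_right h2 hc0
          _ = -p := by field_simp
      have := hkey t (le_of_lt htpos) ht1
      nlinarith
  have hfinal : ‖w‖ ≤ ‖w + r‖ := by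
    rcases eq_or_lt_of_le (norm_nonneg w) with h0 | h0
    · rw [← h0]; exact norm_nonneg _
    · have h1 : ‖w‖ ^ 2 ≤ (inner ℝ w (w + r) : ℝ) := by
        rw [inner_add_right, real_inner_self_eq_norm_sq]
        linarith
      have h2 : (inner ℝ w (w + r) : ℝ) ≤ ‖w‖ * ‖w + r‖ := real_inner_le_norm _ _
      nlinarith
  have hwr : w + r = eu (fun i => Vt.mulVec g i - Xt i j) := by
    ext i
    show Vt.mulVec d i + (Vt.mulVec gt i - Xt i j) = Vt.mulVec g i - Xt i j
    rw [hmv]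
    show (Vt.mulVec g i - Vt.mulVec gt i) + (Vt.mulVec gt i - Xt i j) = _
    ring
  rw [enorm'_eq, enorm'_eq, ← hw, ← hwr]
  exact hfinal
/-- NNLS perturbation corollary: if `V G = X` with `G ≥ 0`, `G̃` minimizes
`‖Ṽ G' − X̃‖_F` over nonnegative `G'`, the columns of `E = X − X̃` have 2-norm at most `ε`,
and `σ_min(V) > σ_max(F)` for `F = V − Ṽ`, then every row of `G − G̃` has 2-norm at most
`√T (σ_max(F) γ + ε)/(σ_min(V) − σ_max(F))`, with `γ` the largest column 2-norm of `G`. -/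
theorem nnls_perturbation (N T R : ℕ) (hT : 0 < T)
    (X Xt : Matrix (Fin N) (Fin T) ℝ)
    (E : Matrix (Fin N) (Fin T) ℝ) (hE : E = X - Xt)
    (ε : ℝ) (hEcol : ∀ j : Fin T, enorm' (fun i => E i j) ≤ ε)
    (V Vt : Matrix (Fin N) (Fin R) ℝ)
    (F : Matrix (Fin N) (Fin R) ℝ) (hF : F = V - Vt)
    (hσ : smax F < smin V)
    (G : Matrix (Fin R) (Fin T) ℝ) (hGpos : ∀ i j, 0 ≤ G i j) (hVG : V * G = X)
    (Gt : Matrix (Fin R) (Fin T) ℝ) (hGtpos : ∀ i j, 0 ≤ Gt i j)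
    (hGt : ∀ G' : Matrix (Fin R) (Fin T) ℝ, (∀ i j, 0 ≤ G' i j) →
      frob (Vt * Gt - Xt) ≤ frob (Vt * G' - Xt))
    (γ : ℝ) (hγ : γ = sSup {c : ℝ | ∃ j : Fin T, c = enorm' (fun i => G i j)}) :
    ∀ i : Fin R, enorm' (fun j => G i j - Gt i j) ≤
      Real.sqrt T * (smax F * γ + ε) / (smin V - smax F) := by
  intro i0
  have hR : 0 < R := by
    by_contra hRn
    push_neg at hRn
    have hR0 : R = 0 := by omega
    subst hR0
    have hset : ∀ (B : Matrix (Fin N) (Fin 0) ℝ),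
        {c : ℝ | ∃ v : Fin 0 → ℝ, enorm' v = 1 ∧ c = enorm' (B.mulVec v)} = ∅ := by
      intro B
      ext c
      simp only [Set.mem_setOf_eq, Set.mem_empty_iff_false, iff_false, not_exists]
      rintro v ⟨hv, -⟩
      have hz : enorm' v = 0 := by unfold enorm'; simp
      rw [hz] at hv
      exact one_ne_zero hv.symm
    have h1 : smax F = 0 := by unfold smax; rw [hset]; exact Real.sSup_empty
    have h2 : smin V = 0 := by unfold smin; rw [hset]; exact Real.sInf_empty
    rw [h1, h2] at hσ
    exact lt_irrefl 0 hσ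
  have hcpos : 0 < smin V - smax F := sub_pos.mpr hσ
  have hsF : 0 ≤ smax F := smax_nonneg hR F
  have hε : 0 ≤ ε := le_trans (enorm'_nonneg _) (hEcol ⟨0, hT⟩)
  have hγset : BddAbove {c : ℝ | ∃ j : Fin T, c = enorm' (fun i => G i j)} := by
    have hrange : {c : ℝ | ∃ j : Fin T, c = enorm' (fun i => G i j)} =
        Set.range (fun j => enorm' (fun i => G i j)) := by
      ext c
      simp [Set.range, eq_comm]
    rw [hrange]
    exact (Set.finite_range _).bddAbove
  have hγcol : ∀ j, enorm' (fun i => G i j) ≤ γ := by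
    intro j
    rw [hγ]
    exact le_csSup hγset ⟨j, rfl⟩
  have hγ0 : 0 ≤ γ := le_trans (enorm'_nonneg _) (hγcol ⟨0, hT⟩)
  set δ : ℝ := smax F * γ + ε with hδ
  have hδ0 : 0 ≤ δ := add_nonneg (mul_nonneg hsF hγ0) hε
  have hVt_eq : Vt = V - F := by rw [hF, sub_sub_cancel]
  have hcolbound : ∀ j : Fin T, enorm' (fun k => G k j - Gt k j) ≤ δ / (smin V - smax F) := by
    intro j
    set g : Fin R → ℝ := fun k => G k j with hgdef
    have h1 : enorm' (Vt.mulVec (fun k => g k - Gt k j)) ≤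
        enorm' (fun i => Vt.mulVec g i - Xt i j) :=
      key_col Vt Xt Gt hGtpos hGt j g (fun k => hGpos k j)
    have hres : (fun i => Vt.mulVec g i - Xt i j) = (fun i => E i j) - F.mulVec g := by
      funext i
      have hVg : V.mulVec g i = X i j := by rw [← hVG]; rfl
      have hEij : E i j = X i j - Xt i j := by rw [hE]; rfl
      have hVtg : Vt.mulVec g i = V.mulVec g i - F.mulVec g i := by
        rw [hVt_eq, Matrix.sub_mulVec]; rfl
      show Vt.mulVec g i - Xt i j = E i j - F.mulVec g i
      rw [hVtg, hVg, hEij]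
      ring
    have h2 : enorm' (fun i => Vt.mulVec g i - Xt i j) ≤ δ := by
      rw [hres]
      calc enorm' ((fun i => E i j) - F.mulVec g)
          ≤ enorm' (fun i => E i j) + enorm' (F.mulVec g) := enorm'_triangle_sub _ _
        _ ≤ ε + smax F * enorm' g := add_le_add (hEcol j) (smax_mulVec_le F g)
        _ ≤ ε + smax F * γ := add_le_add_right (mul_le_mul_of_nonneg_left (hγcol j) hsF) _
        _ = δ := by rw [hδ]; ring
    have h3 : (smin V - smax F) * enorm' (fun k => g k - Gt k j) ≤
        enorm' (Vt.mulVec (fun k => g k - Gt k j)) := by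
      set dj : Fin R → ℝ := fun k => g k - Gt k j with hdj
      have hsplit : Vt.mulVec dj = V.mulVec dj - F.mulVec dj := by
        rw [hVt_eq, Matrix.sub_mulVec]
      rw [hsplit]
      calc (smin V - smax F) * enorm' dj
          = smin V * enorm' dj - smax F * enorm' dj := by ring
        _ ≤ enorm' (V.mulVec dj) - enorm' (F.mulVec dj) :=
            sub_le_sub (smin_mulVec_ge V dj) (smax_mulVec_le F dj)
        _ ≤ enorm' (V.mulVec dj - F.mulVec dj) := enorm'_sub_ge _ _
    have h4 : (smin V - smax F) * enorm' (fun k => g k - Gt k j) ≤ δ :=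
      le_trans h3 (le_trans h1 h2)
    rw [le_div_iff₀ hcpos]
    linarith
  have hrow : (∑ j, (G i0 j - Gt i0 j) ^ 2) ≤ T * (δ / (smin V - smax F)) ^ 2 := by
    have hterm : ∀ j, (G i0 j - Gt i0 j) ^ 2 ≤ (δ / (smin V - smax F)) ^ 2 := by
      intro j
      have h1 : (G i0 j - Gt i0 j) ^ 2 ≤ ∑ k, (G k j - Gt k j) ^ 2 :=
        Finset.single_le_sum (f := fun k => (G k j - Gt k j) ^ 2)
          (fun k _ => sq_nonneg _) (Finset.mem_univ i0)
      have h2 : (∑ k, (G k j - Gt k j) ^ 2) = enorm' (fun k => G k j - Gt k j) ^ 2 := by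
        unfold enorm'
        rw [Real.sq_sqrt (by positivity)]
      rw [h2] at h1
      exact le_trans h1 (pow_le_pow_left₀ (enorm'_nonneg _) (hcolbound j) 2)
    calc (∑ j, (G i0 j - Gt i0 j) ^ 2)
        ≤ ∑ _j : Fin T, (δ / (smin V - smax F)) ^ 2 :=
          Finset.sum_le_sum fun j _ => hterm j
      _ = T * (δ / (smin V - smax F)) ^ 2 := by
          rw [Finset.sum_const, Finset.card_univ, Fintype.card_fin, nsmul_eq_mul]
  have hq : 0 ≤ δ / (smin V - smax F) := div_nonneg hδ0 (le_of_lt hcpos)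
  show enorm' (fun j => G i0 j - Gt i0 j) ≤ Real.sqrt T * δ / (smin V - smax F)
  unfold enorm'
  calc Real.sqrt (∑ j, (G i0 j - Gt i0 j) ^ 2)
      ≤ Real.sqrt (T * (δ / (smin V - smax F)) ^ 2) := Real.sqrt_le_sqrt hrow
    _ = Real.sqrt T * (δ / (smin V - smax F)) := by
        rw [Real.sqrt_mul (by positivity), Real.sqrt_sq hq]
    _ = Real.sqrt T * δ / (smin V - smax F) := by ring


end
end

section
/- Let L ≥ 1 be an integer and let 0 < δ < 35. Let g_i, g_j ∈ ℝ_+^T be entrywise nonnegative vectors such that for every ℓ ∈ {0,…,L−1}, the shifted vectors S_ℓᵀ g_i and S_ℓᵀ g_j are nonzero and max( cos(g_i, S_ℓᵀ g_j), cos(S_ℓᵀ g_i, g_j) ) ≤ 1 − δ. Let m = min_{ℓ ∈ {0,…,L−1}} min( ‖S_ℓᵀ g_i‖₂, ‖S_ℓᵀ g_j‖₂ ), and let g̃_i, g̃_j ∈ ℝ^T satisfy ‖g̃_i − g_i‖₂ ≤ (δ/70) m and ‖g̃_j − g_j‖₂ ≤ (δ/70) m. Then cos_L(g̃_i, g̃_j)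 ≤ 1 − δ/2; that is, noisy versions of two rows that are not shifted variants of one another remain separated in L-shift similarity. -/
open Matrix BigOperators

noncomputable section

/-! ### Auxiliary lemmas -/

open RealInnerProductSpace

/-- Transfer map to Euclidean space. -/
def iotaE {T : ℕ} (u : Fin T → ℝ) : EuclideanSpace ℝ (Fin T) :=
  (WithLp.equiv 2 (Fin T → ℝ)).symm u

lemma enorm_eq_norm {T : ℕ} (u : Fin T → ℝ) : enorm' u = ‖iotaE u‖ := by
  rw [EuclideanSpace.norm_eq, enorm']
  congr 1; apply Finset.sum_congr rfl; intro i _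
  show u i ^ 2 = ‖u i‖ ^ 2
  rw [Real.norm_eq_abs, sq_abs]

lemma dot_eq_inner {T : ℕ} (u v : Fin T → ℝ) : dot u v = ⟪iotaE u, iotaE v⟫ := by
  rw [PiLp.inner_apply, dot]
  simp [RCLike.inner_apply, iotaE, mul_comm]

lemma iotaE_sub {T : ℕ} (u v : Fin T → ℝ) : iotaE (u - v) = iotaE u - iotaE v := rfl

lemma iotaE_eq_zero {T : ℕ} (u : Fin T → ℝ) : iotaE u = 0 ↔ u = 0 :=
  ⟨fun h => by simpa [iotaE] using congrArg WithLp.ofLp h, fun h => by simp [h, iotaE]⟩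

lemma enorm_nonneg {T : ℕ} (u : Fin T → ℝ) : 0 ≤ enorm' u := Real.sqrt_nonneg _

lemma enorm'_pos {T : ℕ} {u : Fin T → ℝ} (hu : u ≠ 0) : 0 < enorm' u := by
  rw [enorm_eq_norm]
  exact norm_pos_iff.mpr (fun h => hu ((iotaE_eq_zero u).mp h))

lemma shift_apply {T : ℕ} (τ : ℕ) (x : Fin T → ℝ) (j : Fin T) :
    shift τ x j = if h : τ ≤ (j : ℕ) then
      x ⟨(j : ℕ) - τ, lt_of_le_of_lt (Nat.sub_le _ _) j.isLt⟩ else 0 := by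
  unfold shift shiftMat Matrix.mulVec Matrix.transpose dotProduct
  simp only [Matrix.of_apply]
  split
  · next h =>
    rw [Finset.sum_eq_single (⟨(j : ℕ) - τ, lt_of_le_of_lt (Nat.sub_le _ _) j.isLt⟩ : Fin T)]
    · simp [Nat.sub_add_cancel h]
    · intro i _ hi
      have : ¬ ((j:ℕ) = (i:ℕ) + τ) := by
        intro hc; apply hi; apply Fin.ext; simp [hc]
      simp [this]
    · simp
  · next h =>
    apply Finset.sum_eq_zero
    intro i _
    have : ¬ ((j:ℕ) = (i:ℕ) + τ) := by omega
    simp [this]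

lemma shift_zero' {T : ℕ} (x : Fin T → ℝ) : shift 0 x = x := by
  funext j; rw [shift_apply]; simp

lemma shift_sub {T : ℕ} (τ : ℕ) (x y : Fin T → ℝ) :
    shift τ (x - y) = shift τ x - shift τ y := by
  unfold shift; exact Matrix.mulVec_sub _ _ _

lemma enorm_shift_le {T : ℕ} (τ : ℕ) (x : Fin T → ℝ) : enorm' (shift τ x) ≤ enorm' x := by
  unfold enorm'
  apply Real.sqrt_le_sqrt
  set e : Fin T → Fin T := fun j => ⟨(j : ℕ) - τ, lt_of_le_of_lt (Nat.sub_le _ _) j.isLt⟩ with he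
  set s : Finset (Fin T) := Finset.univ.filter (fun j : Fin T => τ ≤ (j:ℕ)) with hs
  have h1 : ∑ j, shift τ x j ^ 2 = ∑ j ∈ s, x (e j) ^ 2 := by
    rw [hs, Finset.sum_filter]
    apply Finset.sum_congr rfl
    intro j _
    rw [shift_apply]
    split <;> simp_all [he]
  have hinj : Set.InjOn e s := by
    intro a ha b hb hab
    simp [hs, Finset.mem_filter] at ha hb
    apply Fin.ext
    simp [he] at hab
    omega
  rw [h1, ← Finset.sum_image (f := fun i => x i ^ 2) (g := e)
    (fun a ha b hb h => hinj ha hb h)]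
  apply Finset.sum_le_sum_of_subset_of_nonneg (Finset.subset_univ _)
  intro i _ _
  positivity

section IPS
variable {E : Type*} [NormedAddCommGroup E] [InnerProductSpace ℝ E]

lemma normalize_diff_le (a b : E) (ha : a ≠ 0) (hb : b ≠ 0) :
    ‖‖a‖⁻¹ • a - ‖b‖⁻¹ • b‖ ≤ 2 * ‖a - b‖ / ‖a‖ := by
  have ha' : (0:ℝ) < ‖a‖ := norm_pos_iff.mpr ha
  have hb' : (0:ℝ) < ‖b‖ := norm_pos_iff.mpr hb
  have key : ‖a‖⁻¹ • a - ‖b‖⁻¹ • b = ‖a‖⁻¹ • (a - b) + (‖a‖⁻¹ - ‖b‖⁻¹) • b := by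
    rw [smul_sub, sub_smul]; abel
  rw [key]
  have h1 : ‖‖a‖⁻¹ • (a - b)‖ = ‖a - b‖ / ‖a‖ := by
    rw [norm_smul, norm_inv, norm_norm]; ring
  have h2 : ‖(‖a‖⁻¹ - ‖b‖⁻¹) • b‖ ≤ ‖a - b‖ / ‖a‖ := by
    rw [norm_smul, Real.norm_eq_abs]
    have heq : ‖a‖⁻¹ - ‖b‖⁻¹ = (‖b‖ - ‖a‖) / (‖a‖ * ‖b‖) := by
      field_simp
    rw [heq, abs_div, abs_of_pos (mul_pos ha' hb')]
    have h3 : |‖b‖ - ‖a‖| ≤ ‖a - b‖ := by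
      rw [abs_sub_comm]; exact abs_norm_sub_norm_le a b
    have hcc : |‖b‖ - ‖a‖| / (‖a‖ * ‖b‖) * ‖b‖ = |‖b‖ - ‖a‖| / ‖a‖ := by
      field_simp
    rw [hcc]; gcongr
  calc ‖‖a‖⁻¹ • (a - b) + (‖a‖⁻¹ - ‖b‖⁻¹) • b‖
      ≤ ‖‖a‖⁻¹ • (a - b)‖ + ‖(‖a‖⁻¹ - ‖b‖⁻¹) • b‖ := norm_add_le _ _
    _ ≤ ‖a - b‖ / ‖a‖ + ‖a - b‖ / ‖a‖ := by rw [h1]; gcongr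
    _ = 2 * ‖a - b‖ / ‖a‖ := by ring

lemma key_perturb (u v u' v' : E) (m δ : ℝ) (hδ0 : 0 < δ) (hδ : δ < 35) (hm : 0 < m)
    (hu : m ≤ ‖u‖) (hv : m ≤ ‖v‖)
    (hdu : ‖u' - u‖ ≤ δ / 70 * m) (hdv : ‖v' - v‖ ≤ δ / 70 * m)
    (hcos : ⟪u, v⟫ / (‖u‖ * ‖v‖) ≤ 1 - δ) :
    ⟪u', v'⟫ / (‖u'‖ * ‖v'‖) ≤ 1 - δ / 2 := by
  have hu0 : (0:ℝ) < ‖u‖ := lt_of_lt_of_le hm hu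
  have hv0 : (0:ℝ) < ‖v‖ := lt_of_lt_of_le hm hv
  have hε : δ / 70 * m < m / 2 := by nlinarith
  have hu' : m / 2 < ‖u'‖ := by
    have h2 : ‖u‖ - ‖u' - u‖ ≤ ‖u'‖ := by
      have := norm_sub_norm_le u u'
      have h3 : ‖u - u'‖ = ‖u' - u‖ := norm_sub_rev _ _
      linarith
    linarith
  have hv' : m / 2 < ‖v'‖ := by
    have h2 : ‖v‖ - ‖v' - v‖ ≤ ‖v'‖ := by
      have := norm_sub_norm_le v v'
      have h3 : ‖v - v'‖ = ‖v' - v‖ := norm_sub_rev _ _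
      linarith
    linarith
  have hu'0 : u' ≠ 0 := by intro h; rw [h, norm_zero] at hu'; linarith
  have hv'0 : v' ≠ 0 := by intro h; rw [h, norm_zero] at hv'; linarith
  have hune : u ≠ 0 := fun h => by rw [h, norm_zero] at hu0; linarith
  have hvne : v ≠ 0 := fun h => by rw [h, norm_zero] at hv0; linarith
  set uh := ‖u‖⁻¹ • u
  set vh := ‖v‖⁻¹ • v
  set uh' := ‖u'‖⁻¹ • u'
  set vh' := ‖v'‖⁻¹ • v'
  have huh : ‖uh‖ = 1 := by
    rw [norm_smul, norm_inv, norm_norm, inv_mul_cancel₀ (ne_of_gt hu0)]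
  have hvh' : ‖vh'‖ = 1 := by
    rw [norm_smul, norm_inv, norm_norm, inv_mul_cancel₀ (ne_of_gt (by linarith : (0:ℝ) < ‖v'‖))]
  have e1 : ⟪u', v'⟫ / (‖u'‖ * ‖v'‖) = ⟪uh', vh'⟫ := by
    rw [real_inner_smul_left, real_inner_smul_right]; field_simp
  have e0 : ⟪u, v⟫ / (‖u‖ * ‖v‖) = ⟪uh, vh⟫ := by
    rw [real_inner_smul_left, real_inner_smul_right]; field_simp
  rw [e1]
  have split : ⟪uh', vh'⟫ = ⟪uh, vh⟫ + ⟪uh' - uh, vh'⟫ + ⟪uh, vh' - vh⟫ := by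
    rw [inner_sub_left, inner_sub_right]; ring
  have b1 : ⟪uh' - uh, vh'⟫ ≤ ‖uh' - uh‖ := by
    calc ⟪uh' - uh, vh'⟫ ≤ ‖uh' - uh‖ * ‖vh'‖ := real_inner_le_norm _ _
      _ = ‖uh' - uh‖ := by rw [hvh', mul_one]
  have b2 : ⟪uh, vh' - vh⟫ ≤ ‖vh' - vh‖ := by
    calc ⟪uh, vh' - vh⟫ ≤ ‖uh‖ * ‖vh' - vh‖ := real_inner_le_norm _ _
      _ = ‖vh' - vh‖ := by rw [huh, one_mul]
  have n1 : ‖uh' - uh‖ ≤ 2 * ‖u' - u‖ / ‖u'‖ := normalize_diff_le u' u hu'0 hune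
  have n2 : ‖vh' - vh‖ ≤ 2 * ‖v' - v‖ / ‖v'‖ := normalize_diff_le v' v hv'0 hvne
  have c1 : 2 * ‖u' - u‖ / ‖u'‖ ≤ 2 * δ / 35 := by
    rw [div_le_iff₀ (by linarith)]
    nlinarith [norm_nonneg (u' - u)]
  have c2 : 2 * ‖v' - v‖ / ‖v'‖ ≤ 2 * δ / 35 := by
    rw [div_le_iff₀ (by linarith)]
    nlinarith [norm_nonneg (v' - v)]
  have hcos' : ⟪uh, vh⟫ ≤ 1 - δ := by rw [← e0]; exact hcos
  nlinarith [split, b1, b2, n1, n2, c1, c2]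

end IPS

/-- The perturbation bound, stated for `vcos`. -/
lemma vcos_perturb {T : ℕ} (u v u' v' : Fin T → ℝ) (m δ : ℝ)
    (hδ0 : 0 < δ) (hδ : δ < 35) (hm : 0 < m)
    (hu : m ≤ enorm' u) (hv : m ≤ enorm' v)
    (hdu : enorm' (u' - u) ≤ δ / 70 * m) (hdv : enorm' (v' - v) ≤ δ / 70 * m)
    (hune : u ≠ 0) (hvne : v ≠ 0)
    (hcos : vcos u v ≤ 1 - δ) :
    vcos u' v' ≤ 1 - δ / 2 := by
  rw [enorm_eq_norm] at hu hv
  rw [enorm_eq_norm, iotaE_sub] at hdu hdv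
  have hcos0 : (⟪iotaE u, iotaE v⟫ : ℝ) / (‖iotaE u‖ * ‖iotaE v‖) ≤ 1 - δ := by
    rw [vcos, if_neg (by push_neg; exact ⟨hune, hvne⟩), dot_eq_inner,
      enorm_eq_norm, enorm_eq_norm] at hcos
    exact hcos
  have key := key_perturb (iotaE u) (iotaE v) (iotaE u') (iotaE v')
    m δ hδ0 hδ hm hu hv hdu hdv hcos0
  -- u' and v' are nonzero
  have hε : δ / 70 * m < m / 2 := by nlinarith
  have hu'0 : u' ≠ 0 := by
    intro h
    rw [h] at hdu
    have hz : iotaE (0 : Fin T → ℝ) = 0 := rfl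
    rw [hz, zero_sub, norm_neg] at hdu
    linarith
  have hv'0 : v' ≠ 0 := by
    intro h
    rw [h] at hdv
    have hz : iotaE (0 : Fin T → ℝ) = 0 := rfl
    rw [hz, zero_sub, norm_neg] at hdv
    linarith
  rw [vcos, if_neg (by push_neg; exact ⟨hu'0, hv'0⟩), dot_eq_inner,
    enorm_eq_norm, enorm_eq_norm]
  exact key

/-- noisy versions of two nonnegative rows that are not shifted variants of
one another remain separated in `L`-shift similarity: `cos_L(g̃ᵢ, g̃ⱼ) ≤ 1 − δ/2`. -/
theorem cosL_noisy_not_shifted_variants (T L : ℕ) (hL : 1 ≤ L) (δ : ℝ)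
    (hδ0 : 0 < δ) (hδ : δ < 35)
    (gi gj : Fin T → ℝ) (hgi : ∀ s, 0 ≤ gi s) (hgj : ∀ s, 0 ≤ gj s)
    (hnz : ∀ ℓ : ℕ, ℓ < L → shift ℓ gi ≠ 0 ∧ shift ℓ gj ≠ 0)
    (hsep : ∀ ℓ : ℕ, ℓ < L →
      max (vcos gi (shift ℓ gj)) (vcos (shift ℓ gi) gj) ≤ 1 - δ)
    (m : ℝ)
    (hm : m = sInf {c : ℝ | ∃ ℓ : ℕ, ℓ < L ∧
      (c = enorm' (shift ℓ gi) ∨ c = enorm' (shift ℓ gj))})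
    (gti gtj : Fin T → ℝ)
    (hi : enorm' (gti - gi) ≤ δ / 70 * m)
    (hj : enorm' (gtj - gj) ≤ δ / 70 * m) :
    cosL L gti gtj ≤ 1 - δ / 2 := by
  set S : Set ℝ := {c : ℝ | ∃ ℓ : ℕ, ℓ < L ∧
      (c = enorm' (shift ℓ gi) ∨ c = enorm' (shift ℓ gj))} with hS
  have hbdd : BddBelow S := by
    refine ⟨0, fun c hc => ?_⟩
    obtain ⟨ℓ, _, h | h⟩ := hc <;> rw [h] <;> exact enorm_nonneg _
  have hfin : S.Finite := by
    have : S ⊆ ((fun ℓ => enorm' (shift ℓ gi)) '' (Set.Iio L)) ∪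
        ((fun ℓ => enorm' (shift ℓ gj)) '' (Set.Iio L)) := by
      rintro c ⟨ℓ, hℓ, h | h⟩
      · exact Or.inl ⟨ℓ, hℓ, h.symm⟩
      · exact Or.inr ⟨ℓ, hℓ, h.symm⟩
    exact Set.Finite.subset (((Set.finite_Iio L).image _).union ((Set.finite_Iio L).image _)) this
  have hne : S.Nonempty := ⟨enorm' (shift 0 gi), 0, hL, Or.inl rfl⟩
  have hmpos : 0 < m := by
    have hmem : sInf S ∈ S := Set.Nonempty.csInf_mem hne hfin
    rw [← hS, ← hm] at *
    obtain ⟨ℓ, hℓ, h | h⟩ := hmem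
    · rw [h]; exact enorm'_pos (hnz ℓ hℓ).1
    · rw [h]; exact enorm'_pos (hnz ℓ hℓ).2
  have hmle_i : ∀ ℓ : ℕ, ℓ < L → m ≤ enorm' (shift ℓ gi) := by
    intro ℓ hℓ
    rw [hm]
    exact csInf_le hbdd ⟨ℓ, hℓ, Or.inl rfl⟩
  have hmle_j : ∀ ℓ : ℕ, ℓ < L → m ≤ enorm' (shift ℓ gj) := by
    intro ℓ hℓ
    rw [hm]
    exact csInf_le hbdd ⟨ℓ, hℓ, Or.inr rfl⟩
  haveI : Nonempty (Fin L) := Fin.pos_iff_nonempty.mp hL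
  rw [cosL]
  apply ciSup_le
  intro ℓ
  have hℓ : (ℓ : ℕ) < L := ℓ.isLt
  apply max_le
  · -- vcos (shift ℓ gti) gtj ≤ 1 - δ/2
    apply vcos_perturb (shift (ℓ:ℕ) gi) gj _ _ m δ hδ0 hδ hmpos
      (hmle_i _ hℓ) (by rw [← shift_zero' gj]; exact hmle_j 0 hL)
    · rw [← shift_sub]
      exact le_trans (enorm_shift_le _ _) hi
    · exact hj
    · exact (hnz _ hℓ).1
    · rw [← shift_zero' gj] ; exact (hnz 0 hL).2
    · exact le_trans (le_max_right _ _) (hsep _ hℓ)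
  · -- vcos gti (shift ℓ gtj) ≤ 1 - δ/2
    apply vcos_perturb gi (shift (ℓ:ℕ) gj) _ _ m δ hδ0 hδ hmpos
      (by rw [← shift_zero' gi]; exact hmle_i 0 hL) (hmle_j _ hℓ)
    · exact hi
    · rw [← shift_sub]
      exact le_trans (enorm_shift_le _ _) hj
    · rw [← shift_zero' gi]; exact (hnz 0 hL).1
    · exact (hnz _ hℓ).2
    · exact le_trans (le_max_left _ _) (hsep _ hℓ)

end
end
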